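/- Let γ ∈ Γ, and suppose U and V are ℓ×ℓ unimodular integer matrices and d_1, …, d_ℓ are integers such that U(R_γ − I)V = diag(d_1, …, d_ℓ). Then T^γ = π_T((⊕_{i : d_i ≠ 0} d_i^{-1}ℤ u_i) ⊕ (⊕_{i : d_i = 0} ℝ u_i)) = { Σ_{d_i ≠ 0} π_T(a_i · d_i^{-1} u_i) + Σ_{d_i = 0} π_T(b_i · u_i) : a_i ∈ ℤ, b_i ∈ ℝ }. Furthermore, for every q ∈ ℤ_{>0}, the set of q-torsion points fixed by γ is T[q]^γ = { Σ_{d_i ≠ 0} π_T(a_i · gcd(d_i,q)^{-1} u_i) + Σ_{d_i = 0} π_T(b_i · q^{-1} u_i) : a_i, b_i ∈ ℤ }. -/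

import Mathlib

open Matrix

/-- The lattice `L = ℤ^ℓ` sitting inside `L_ℝ = ℝ^ℓ`. -/
def intLattice (ℓ : ℕ) : AddSubgroup (Fin ℓ → ℝ) :=
  AddSubgroup.pi Set.univ fun _ => AddSubgroup.zmultiples (1 : ℝ)

/-- The `ℓ`-torus `T = L_ℝ / L`. -/
abbrev Torus (ℓ : ℕ) := (Fin ℓ → ℝ) ⧸ intLattice ℓ

/-- The natural projection `π_T : L_ℝ → T`. -/
abbrev pT (ℓ : ℕ) : (Fin ℓ → ℝ) →+ Torus ℓ := QuotientAddGroup.mk' (intLattice ℓ)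

lemma mem_intLattice {ℓ : ℕ} (x : Fin ℓ → ℝ) :
    x ∈ intLattice ℓ ↔ ∀ i, ∃ n : ℤ, (n : ℝ) = x i := by
  simp [intLattice, AddSubgroup.mem_pi, AddSubgroup.mem_zmultiples_iff, zsmul_eq_mul, mul_one]

lemma pT_eq_iff {ℓ : ℕ} (x y : Fin ℓ → ℝ) :
    pT ℓ x = pT ℓ y ↔ x - y ∈ intLattice ℓ := by
  rw [← sub_eq_zero, ← map_sub]
  exact QuotientAddGroup.eq_zero_iff _

lemma pT_eq_zero_iff {ℓ : ℕ} (x : Fin ℓ → ℝ) :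
    pT ℓ x = 0 ↔ x ∈ intLattice ℓ :=
  QuotientAddGroup.eq_zero_iff _

lemma vecMul_int {ℓ : ℕ} (A : Matrix (Fin ℓ) (Fin ℓ) ℤ) {v : Fin ℓ → ℝ}
    (hv : ∀ i, ∃ n : ℤ, (n : ℝ) = v i) :
    ∀ j, ∃ n : ℤ, (n : ℝ) = (v ᵥ* (A.map (Int.cast : ℤ → ℝ))) j := by
  choose n hn using hv
  intro j
  refine ⟨∑ i, n i * A i j, ?_⟩
  simp only [Matrix.vecMul, dotProduct, Matrix.map_apply]
  push_cast
  exact Finset.sum_congr rfl fun i _ => by rw [hn]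

lemma unimod_inv {ℓ : ℕ} (A : Matrix (Fin ℓ) (Fin ℓ) ℤ) (hA : A.det = 1 ∨ A.det = -1) :
    ∃ B : Matrix (Fin ℓ) (Fin ℓ) ℤ, A * B = 1 ∧ B * A = 1 := by
  refine ⟨A.det • A.adjugate, ?_, ?_⟩
  · rw [Matrix.mul_smul, Matrix.mul_adjugate, smul_smul]
    rcases hA with h | h <;> simp [h]
  · rw [Matrix.smul_mul, Matrix.adjugate_mul, smul_smul]
    rcases hA with h | h <;> simp [h]

lemma sum_smul_rows {ℓ : ℕ} (A : Matrix (Fin ℓ) (Fin ℓ) ℤ) (c : Fin ℓ → ℝ) :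
    (∑ i, c i • (fun j => ((A i j : ℤ) : ℝ))) = c ᵥ* (A.map (Int.cast : ℤ → ℝ)) := by
  funext j
  simp [Matrix.vecMul, dotProduct, Finset.sum_apply, Matrix.map_apply]

lemma map_int_mul {ℓ : ℕ} (A B : Matrix (Fin ℓ) (Fin ℓ) ℤ) :
    (A * B).map (Int.cast : ℤ → ℝ) = A.map Int.cast * B.map Int.cast := by
  simpa using Matrix.map_mul (L := A) (M := B) (f := Int.castRingHom ℝ)

lemma map_int_one {ℓ : ℕ} :
    ((1 : Matrix (Fin ℓ) (Fin ℓ) ℤ)).map (Int.cast : ℤ → ℝ) = 1 :=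
  Matrix.map_one _ (by simp) (by simp)

theorem stmt_7 {ℓ : ℕ} {Γ : Type*} [Group Γ] [Fintype Γ]
    (ρ : Γ →* Matrix.GeneralLinearGroup (Fin ℓ) ℤ)
    (hρ : Function.Injective ρ)
    (γ : Γ)
    (U V : Matrix (Fin ℓ) (Fin ℓ) ℤ)
    (hU : U.det = 1 ∨ U.det = -1) (hV : V.det = 1 ∨ V.det = -1)
    (d : Fin ℓ → ℤ)
    (hdiag : U * ((ρ γ : Matrix (Fin ℓ) (Fin ℓ) ℤ) - 1) * V = Matrix.diagonal d)
    (q : ℕ) (hq : 0 < q) :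
    ({t : Torus ℓ | ∃ x : Fin ℓ → ℝ, t = pT ℓ x ∧
        pT ℓ (x ᵥ* (((ρ γ : Matrix (Fin ℓ) (Fin ℓ) ℤ)).map (Int.cast : ℤ → ℝ))) = pT ℓ x} =
      {t : Torus ℓ | ∃ (a : Fin ℓ → ℤ) (b : Fin ℓ → ℝ),
        t = pT ℓ (∑ i, (if d i ≠ 0 then (a i : ℝ) / (d i : ℝ) else b i) •
          (fun j => ((U i j : ℤ) : ℝ)))}) ∧
    ({t : Torus ℓ | q • t = 0 ∧ ∃ x : Fin ℓ → ℝ, t = pT ℓ x ∧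
        pT ℓ (x ᵥ* (((ρ γ : Matrix (Fin ℓ) (Fin ℓ) ℤ)).map (Int.cast : ℤ → ℝ))) = pT ℓ x} =
      {t : Torus ℓ | ∃ a b : Fin ℓ → ℤ,
        t = pT ℓ (∑ i, (if d i ≠ 0 then (a i : ℝ) / ((Int.gcd (d i) q : ℕ) : ℝ)
          else (b i : ℝ) / (q : ℝ)) • (fun j => ((U i j : ℤ) : ℝ)))}) := by
  obtain ⟨U', hUU', hU'U⟩ := unimod_inv U hU
  obtain ⟨V', hVV', hV'V⟩ := unimod_inv V hV
  set R : Matrix (Fin ℓ) (Fin ℓ) ℤ := (ρ γ : Matrix (Fin ℓ) (Fin ℓ) ℤ) with hRdef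
  set Ur := U.map (Int.cast : ℤ → ℝ) with hUrdef
  set U'r := U'.map (Int.cast : ℤ → ℝ) with hU'rdef
  set Vr := V.map (Int.cast : ℤ → ℝ) with hVrdef
  set V'r := V'.map (Int.cast : ℤ → ℝ) with hV'rdef
  set Rr := R.map (Int.cast : ℤ → ℝ) with hRrdef
  set Mr := Rr - 1 with hMrdef
  set Dr : Matrix (Fin ℓ) (Fin ℓ) ℝ := Matrix.diagonal (fun i => (d i : ℝ)) with hDrdef
  have hUrU'r : Ur * U'r = 1 := by rw [hUrdef, hU'rdef, ← map_int_mul, hUU', map_int_one]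
  have hU'rUr : U'r * Ur = 1 := by rw [hUrdef, hU'rdef, ← map_int_mul, hU'U, map_int_one]
  have hVrV'r : Vr * V'r = 1 := by rw [hVrdef, hV'rdef, ← map_int_mul, hVV', map_int_one]
  have hMreq : (R - 1).map (Int.cast : ℤ → ℝ) = Mr := by
    rw [hMrdef, hRrdef, Matrix.map_sub _ (fun a b => by push_cast; ring), map_int_one]
  have hD : Ur * Mr * Vr = Dr := by
    rw [← hMreq, hUrdef, hVrdef, ← map_int_mul, ← map_int_mul, hdiag, hDrdef,
      Matrix.diagonal_map (by simp)]
  have hUM : Ur * Mr = Dr * V'r := by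
    rw [← hD, mul_assoc (Ur * Mr) Vr V'r, hVrV'r, mul_one]
  -- key equivalence for the fixed-point condition
  have key : ∀ x : Fin ℓ → ℝ, (pT ℓ (x ᵥ* Rr) = pT ℓ x ↔
      ∀ i, ∃ n : ℤ, (n : ℝ) = (x ᵥ* U'r) i * (d i : ℝ)) := by
    intro x
    set y := x ᵥ* U'r with hy
    have hx : x = y ᵥ* Ur := by rw [hy, Matrix.vecMul_vecMul, hU'rUr, Matrix.vecMul_one]
    have hsub : x ᵥ* Rr - x = x ᵥ* Mr := by
      rw [hMrdef, Matrix.vecMul_sub, Matrix.vecMul_one]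
    have hyD : ∀ i, (y ᵥ* Dr) i = y i * (d i : ℝ) := fun i => Matrix.vecMul_diagonal _ _ _
    have hxM : x ᵥ* Mr = (y ᵥ* Dr) ᵥ* V'r := by
      conv_lhs => rw [hx]
      rw [Matrix.vecMul_vecMul, hUM, ← Matrix.vecMul_vecMul]
    rw [pT_eq_iff, hsub]
    constructor
    · intro h i
      have h2 := vecMul_int V ((mem_intLattice _).1 h)
      have h3 : (x ᵥ* Mr) ᵥ* Vr = y ᵥ* Dr := by
        conv_lhs => rw [hx]
        rw [Matrix.vecMul_vecMul, Matrix.vecMul_vecMul, ← mul_assoc, hD]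
      rw [← hVrdef] at h2
      rw [h3] at h2
      obtain ⟨n, hn⟩ := h2 i
      exact ⟨n, by rw [hn, hyD]⟩
    · intro h
      rw [mem_intLattice, hxM]
      apply vecMul_int V'
      intro i
      obtain ⟨n, hn⟩ := h i
      exact ⟨n, by rw [hyD]; exact hn⟩
  -- key equivalence for the torsion condition
  have keyq : ∀ x : Fin ℓ → ℝ, (q • pT ℓ x = 0 ↔
      ∀ i, ∃ n : ℤ, (n : ℝ) = (q : ℝ) * (x ᵥ* U'r) i) := by
    intro x
    set y := x ᵥ* U'r with hy
    have hx : x = y ᵥ* Ur := by rw [hy, Matrix.vecMul_vecMul, hU'rUr, Matrix.vecMul_one]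
    have h1 : q • pT ℓ x = pT ℓ ((q : ℝ) • x) := by
      rw [← map_nsmul]
      congr 1
      exact (Nat.cast_smul_eq_nsmul ℝ q x).symm
    rw [h1, pT_eq_zero_iff]
    constructor
    · intro h i
      have h2 := vecMul_int U' ((mem_intLattice _).1 h)
      rw [← hU'rdef] at h2
      have h3 : ((q : ℝ) • x) ᵥ* U'r = (q : ℝ) • y := by rw [Matrix.smul_vecMul, hy]
      rw [h3] at h2
      obtain ⟨n, hn⟩ := h2 i
      exact ⟨n, by rw [hn]; simp⟩
    · intro h
      rw [mem_intLattice]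
      have h3 : (q : ℝ) • x = ((q : ℝ) • y) ᵥ* Ur := by
        conv_lhs => rw [hx]
        rw [Matrix.smul_vecMul]
      rw [h3]
      apply vecMul_int U
      intro i
      obtain ⟨n, hn⟩ := h i
      exact ⟨n, by simpa using hn⟩
  constructor
  · ext t
    simp only [Set.mem_setOf_eq]
    constructor
    · rintro ⟨x, rfl, hfix⟩
      rw [key] at hfix
      choose n hn using hfix
      refine ⟨n, x ᵥ* U'r, ?_⟩
      rw [sum_smul_rows, ← hUrdef]
      have hc : (fun i => if d i ≠ 0 then (n i : ℝ) / (d i : ℝ) else (x ᵥ* U'r) i)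
          = x ᵥ* U'r := by
        funext i
        by_cases hdi : d i = 0
        · simp [hdi]
        · have hdr : ((d i : ℝ)) ≠ 0 := Int.cast_ne_zero.2 hdi
          simp only [hdi, ne_eq, not_false_eq_true, if_true]
          rw [hn i, mul_div_cancel_right₀ _ hdr]
      rw [hc, Matrix.vecMul_vecMul, hU'rUr, Matrix.vecMul_one]
    · rintro ⟨a, b, rfl⟩
      rw [sum_smul_rows, ← hUrdef]
      set c : Fin ℓ → ℝ := fun i => if d i ≠ 0 then (a i : ℝ) / (d i : ℝ) else b i with hcdef
      refine ⟨c ᵥ* Ur, rfl, ?_⟩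
      rw [key]
      have hcy : (c ᵥ* Ur) ᵥ* U'r = c := by
        rw [Matrix.vecMul_vecMul, hUrU'r, Matrix.vecMul_one]
      rw [hcy]
      intro i
      by_cases hdi : d i = 0
      · exact ⟨0, by simp [hdi]⟩
      · have hdr : ((d i : ℝ)) ≠ 0 := Int.cast_ne_zero.2 hdi
        refine ⟨a i, ?_⟩
        simp only [hcdef, hdi, ne_eq, not_false_eq_true, if_true]
        field_simp
  · ext t
    simp only [Set.mem_setOf_eq]
    have hqr : ((q : ℝ)) ≠ 0 := Nat.cast_ne_zero.2 hq.ne'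
    constructor
    · rintro ⟨htor, x, rfl, hfix⟩
      rw [key] at hfix
      rw [keyq] at htor
      choose n hn using hfix
      choose m hm using htor
      set y := x ᵥ* U'r with hy
      refine ⟨fun i => if d i = 0 then 0 else
          Int.gcdA (d i) q * n i + Int.gcdB (d i) q * m i, m, ?_⟩
      rw [sum_smul_rows, ← hUrdef]
      have hc : (fun i => if d i ≠ 0 then
          ((if d i = 0 then 0 else Int.gcdA (d i) q * n i + Int.gcdB (d i) q * m i : ℤ) : ℝ)
            / ((Int.gcd (d i) q : ℕ) : ℝ)
          else ((m i : ℝ)) / (q : ℝ)) = y := by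
        funext i
        by_cases hdi : d i = 0
        · simp only [hdi, ne_eq, not_true_eq_false, if_false]
          rw [hm i, mul_comm, mul_div_assoc, div_self hqr, mul_one]
        · have hg0 : Int.gcd (d i) (q : ℤ) ≠ 0 := fun h => hdi (Int.gcd_eq_zero_iff.mp h).1
          have hg : (Int.gcd (d i) (q : ℤ) : ℤ) ≠ 0 := Int.natCast_ne_zero.mpr hg0
          have hgr : ((Int.gcd (d i) (q : ℤ) : ℕ) : ℝ) ≠ 0 := by
            exact_mod_cast hg
          have hbez : ((Int.gcd (d i) (q : ℤ) : ℕ) : ℝ)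
              = (d i : ℝ) * (Int.gcdA (d i) q : ℝ) + (q : ℝ) * (Int.gcdB (d i) q : ℝ) := by
            have := Int.gcd_eq_gcd_ab (d i) (q : ℤ)
            exact_mod_cast this
          simp only [hdi, ne_eq, not_false_eq_true, if_true, if_false]
          rw [div_eq_iff hgr]
          push_cast
          rw [hn i, hm i, hbez]
          ring
      rw [hc, hy, Matrix.vecMul_vecMul, hU'rUr, Matrix.vecMul_one]
    · rintro ⟨a, b, rfl⟩
      rw [sum_smul_rows, ← hUrdef]
      set c : Fin ℓ → ℝ := fun i => if d i ≠ 0 then (a i : ℝ) / ((Int.gcd (d i) q : ℕ) : ℝ)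
        else (b i : ℝ) / (q : ℝ) with hcdef
      have hcy : (c ᵥ* Ur) ᵥ* U'r = c := by
        rw [Matrix.vecMul_vecMul, hUrU'r, Matrix.vecMul_one]
      refine ⟨?_, c ᵥ* Ur, rfl, ?_⟩
      · rw [keyq, hcy]
        intro i
        by_cases hdi : d i = 0
        · refine ⟨b i, ?_⟩
          simp only [hcdef, hdi, ne_eq, not_true_eq_false, if_false]
          field_simp
        · have hg0 : Int.gcd (d i) (q : ℤ) ≠ 0 := fun h => hdi (Int.gcd_eq_zero_iff.mp h).1
          have hg : (Int.gcd (d i) (q : ℤ) : ℤ) ≠ 0 := Int.natCast_ne_zero.mpr hg0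
          have hgr : ((Int.gcd (d i) (q : ℤ) : ℕ) : ℝ) ≠ 0 := by exact_mod_cast hg
          obtain ⟨e, he⟩ : (Int.gcd (d i) (q : ℤ) : ℤ) ∣ (q : ℤ) := Int.gcd_dvd_right _ _
          refine ⟨a i * e, ?_⟩
          simp only [hcdef, hdi, ne_eq, not_false_eq_true, if_true]
          have heR : (q : ℝ) = ((Int.gcd (d i) (q : ℤ) : ℕ) : ℝ) * (e : ℝ) := by
            exact_mod_cast he
          rw [heR]
          push_cast
          field_simp
      · rw [key, hcy]
        intro i
        by_cases hdi : d i = 0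
        · exact ⟨0, by simp [hcdef, hdi]⟩
        · have hg0 : Int.gcd (d i) (q : ℤ) ≠ 0 := fun h => hdi (Int.gcd_eq_zero_iff.mp h).1
          have hg : (Int.gcd (d i) (q : ℤ) : ℤ) ≠ 0 := Int.natCast_ne_zero.mpr hg0
          have hgr : ((Int.gcd (d i) (q : ℤ) : ℕ) : ℝ) ≠ 0 := by exact_mod_cast hg
          obtain ⟨e, he⟩ : (Int.gcd (d i) (q : ℤ) : ℤ) ∣ d i := Int.gcd_dvd_left _ _
          refine ⟨a i * e, ?_⟩
          simp only [hcdef, hdi, ne_eq, not_false_eq_true, if_true]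
          have heR : ((d i : ℤ) : ℝ) = ((Int.gcd (d i) (q : ℤ) : ℕ) : ℝ) * (e : ℝ) := by
            exact_mod_cast he
          rw [heR]
          push_cast
          field_simp
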